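/- Let (v_n)_{n≥1} be a sequence of strictly positive real numbers such that n^κ v_n → 0 as n → ∞ for some κ > 0, and let c > 0. Then the series ∑_{n≥1} ( 1 − (1 − exp(−c/√(v_n)))^n ) converges. -/

import Mathlib

open Filter

theorem stmt10 (v : ℕ → ℝ) (hv : ∀ n, 1 ≤ n → 0 < v n)
    (κ : ℝ) (hκ : 0 < κ)
    (hlim : Tendsto (fun n : ℕ => (n : ℝ) ^ κ * v n) atTop (nhds 0))
    (c : ℝ) (hc : 0 < c) :
    Summable (fun n : ℕ =>
      1 - (1 - Real.exp (-c / Real.sqrt (v (n + 1)))) ^ (n + 1)) := by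
  -- comparison sequence
  have hgsum : Summable (fun n : ℕ => ((n : ℝ) + 1) ^ (-2 : ℝ)) := by
    have h1 : Summable (fun n : ℕ => (n : ℝ) ^ (-2 : ℝ)) :=
      (Real.summable_nat_rpow).mpr (by norm_num)
    have h2 := (summable_nat_add_iff 1).mpr h1
    refine h2.congr fun n => ?_
    push_cast
    ring_nf
  -- eventual bound v (n+1) ≤ ((n:ℝ)+1)^(-κ)
  have hA : ∀ᶠ n : ℕ in atTop, (n : ℝ) ^ κ * v n < 1 :=
    hlim.eventually (gt_mem_nhds one_pos)
  have hA' : ∀ᶠ n : ℕ in atTop, ((n : ℝ) + 1) ^ κ * v (n + 1) < 1 := by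
    have := (tendsto_add_atTop_nat 1).eventually hA
    refine this.mono fun n h => ?_
    push_cast at h
    exact h
  -- eventual bound from the exponential decay
  have hT : Tendsto (fun n : ℕ => ((n : ℝ) + 1) ^ (κ / 2)) atTop atTop := by
    exact (tendsto_rpow_atTop (by positivity)).comp
      (tendsto_atTop_add_const_right _ 1 tendsto_natCast_atTop_atTop)
  have hF : Tendsto (fun x : ℝ => x ^ (6 / κ) * Real.exp (-c * x)) atTop (nhds 0) :=
    tendsto_rpow_mul_exp_neg_mul_atTop_nhds_zero _ c hc
  have hB0 : Tendsto
      (fun n : ℕ => (((n : ℝ) + 1) ^ (κ / 2)) ^ (6 / κ)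
        * Real.exp (-c * ((n : ℝ) + 1) ^ (κ / 2))) atTop (nhds 0) := hF.comp hT
  have hB1 : Tendsto
      (fun n : ℕ => ((n : ℝ) + 1) ^ (3 : ℝ)
        * Real.exp (-c * ((n : ℝ) + 1) ^ (κ / 2))) atTop (nhds 0) := by
    refine hB0.congr fun n => ?_
    rw [← Real.rpow_mul (by positivity)]
    congr 2
    field_simp
    ring
  have hB : ∀ᶠ n : ℕ in atTop,
      ((n : ℝ) + 1) ^ (3 : ℝ) * Real.exp (-c * ((n : ℝ) + 1) ^ (κ / 2)) ≤ 1 :=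
    hB1.eventually (ge_mem_nhds one_pos)
  -- main comparison
  refine Summable.of_norm_bounded_eventually_nat hgsum ?_
  filter_upwards [hA', hB] with n h1 h2
  set V := v (n + 1) with hV
  have hVpos : 0 < V := hv (n + 1) (by omega)
  have hsV : 0 < Real.sqrt V := Real.sqrt_pos.mpr hVpos
  set E := Real.exp (-c / Real.sqrt V) with hE
  have hEpos : 0 < E := Real.exp_pos _
  have hElt1 : E < 1 := by
    rw [hE, Real.exp_lt_one_iff]
    exact div_neg_of_neg_of_pos (by linarith) hsV
  -- nonnegativity of the term
  have hpow_le : (1 - E) ^ (n + 1) ≤ 1 :=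
    pow_le_one₀ (by linarith) (by linarith)
  have hterm_nonneg : 0 ≤ 1 - (1 - E) ^ (n + 1) := by linarith
  -- Bernoulli: term ≤ (n+1) * E
  have hbern : 1 - (1 - E) ^ (n + 1) ≤ ((n : ℝ) + 1) * E := by
    have := one_add_mul_le_pow (a := -E) (by linarith) (n + 1)
    have h' : 1 + ((n : ℕ) + 1 : ℕ) * (-E) ≤ (1 - E) ^ (n + 1) := by
      simpa [sub_eq_add_neg] using this
    push_cast at h'
    nlinarith
  -- V ≤ ((n:ℝ)+1)^(-κ)
  have hnp : (0 : ℝ) < (n : ℝ) + 1 := by positivity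
  have hVle : V ≤ ((n : ℝ) + 1) ^ (-κ) := by
    have hp : 0 < ((n : ℝ) + 1) ^ κ := Real.rpow_pos_of_pos hnp κ
    rw [Real.rpow_neg hnp.le, inv_eq_one_div, le_div_iff₀ hp]
    nlinarith [h1]
  -- √V ≤ ((n:ℝ)+1)^(-(κ/2))
  have hsVle : Real.sqrt V ≤ ((n : ℝ) + 1) ^ (-(κ / 2)) := by
    have := Real.sqrt_le_sqrt hVle
    rwa [show ((n : ℝ) + 1) ^ (-κ) = (((n : ℝ) + 1) ^ (-(κ/2)))^(2:ℕ) by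
      rw [← Real.rpow_natCast (_ ^ (-(κ/2))), ← Real.rpow_mul hnp.le]; norm_num,
      Real.sqrt_sq (by positivity)] at this
  -- E ≤ exp (-c * (n+1)^(κ/2))
  have hEle : E ≤ Real.exp (-c * ((n : ℝ) + 1) ^ (κ / 2)) := by
    rw [hE, Real.exp_le_exp, neg_div, neg_mul, neg_le_neg_iff]
    have h' : Real.sqrt V ≤ (((n : ℝ) + 1) ^ (κ / 2))⁻¹ := by
      rw [← Real.rpow_neg hnp.le]; exact hsVle
    calc c * ((n : ℝ) + 1) ^ (κ / 2) = c / (((n : ℝ) + 1) ^ (κ / 2))⁻¹ := by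
          field_simp
      _ ≤ c / Real.sqrt V := div_le_div_of_nonneg_left hc.le hsV h'
  -- final bound
  have hXpos : 0 < Real.exp (-c * ((n : ℝ) + 1) ^ (κ / 2)) := Real.exp_pos _
  have hfinal : ((n : ℝ) + 1) * E ≤ ((n : ℝ) + 1) ^ (-2 : ℝ) := by
    have step1 : ((n : ℝ) + 1) * E ≤ ((n : ℝ) + 1) * Real.exp (-c * ((n : ℝ) + 1) ^ (κ / 2)) :=
      mul_le_mul_of_nonneg_left hEle hnp.le
    have key : ((n : ℝ) + 1) = ((n : ℝ) + 1) ^ (-2 : ℝ) * ((n : ℝ) + 1) ^ (3 : ℝ) := by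
      rw [← Real.rpow_add hnp]
      norm_num
    calc ((n : ℝ) + 1) * E
        ≤ ((n : ℝ) + 1) * Real.exp (-c * ((n : ℝ) + 1) ^ (κ / 2)) := step1
      _ = ((n : ℝ) + 1) ^ (-2 : ℝ) *
            (((n : ℝ) + 1) ^ (3 : ℝ) * Real.exp (-c * ((n : ℝ) + 1) ^ (κ / 2))) := by
          rw [← mul_assoc, ← key]
      _ ≤ ((n : ℝ) + 1) ^ (-2 : ℝ) * 1 :=
          mul_le_mul_of_nonneg_left h2 (by positivity)
      _ = ((n : ℝ) + 1) ^ (-2 : ℝ) := mul_one _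
  rw [Real.norm_eq_abs, abs_of_nonneg hterm_nonneg]
  exact hbern.trans hfinal
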